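/- One-step simulation invariant: if x₁:bit,...,xₙ:bit ⊢ M : bit^m and (M,(I,C),L) →_am (N,(I,C'),L'), then for every valuation u⃗ on I, either T(M,(I,C),L)(u⃗) equals T(N,(I,C'),L')(u⃗) (when the step eliminates a boolean constant tt or ff), or T(M,(I,C),L)(u⃗) reduces in one small-step to T(N,(I,C'),L')(u⃗), or N contains Err. -/

import Mathlib

set_option autoImplicit true
set_option maxHeartbeats 1000000


/-- A multi-controlled-not gate: an active wire and a list of controls
(wire, polarity). -/
structure Gate where
  active : ℕ
  controls : List (ℕ × Bool)

/-- Well-formedness: no control wire coincides with the active wire. -/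
def Gate.wf (g : Gate) : Prop := ∀ c ∈ g.controls, c.1 ≠ g.active

/-- The set of wires of a gate. -/
def Gate.wires (g : Gate) : Set ℕ := insert g.active {w | ∃ b, (w, b) ∈ g.controls}

/-- Value of a control `(j, b)` on a valuation `v` : `v j XOR b XOR true`. -/
def ctrlVal (v : ℕ → Bool) (c : ℕ × Bool) : Bool := Bool.xor (v c.1) (Bool.xor c.2 true)

/-- Execution of a gate on a valuation. -/
def execGate (g : Gate) (v : ℕ → Bool) : ℕ → Bool := fun l =>
  if l = g.active then
    if g.controls.isEmpty then !(v l)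
    else Bool.xor (v l) (g.controls.all (ctrlVal v))
  else v l

/-- Execution of a list of gates, in order. -/
def execCircuit (C : List Gate) (v : ℕ → Bool) : ℕ → Bool :=
  C.foldl (fun v g => execGate g v) v

/-- Wires of a circuit. -/
def circuitWires (C : List Gate) : Set ℕ := {w | ∃ g ∈ C, w ∈ g.wires}

/-! ## The language PCF^list -/

/-- Types of PCF^list. -/
inductive Ty : Type
  | bit : Ty
  | unit : Ty
  | arrow : Ty → Ty → Ty
  | prod : Ty → Ty → Ty
  | sum : Ty → Ty → Ty
  | list : Ty → Ty

/-- Terms of PCF^list, with de Bruijn indices. -/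
inductive Tm : Type
  | var : ℕ → Tm
  | lam : Tm → Tm
  | app : Tm → Tm → Tm
  | pair : Tm → Tm → Tm
  | fst : Tm → Tm
  | snd : Tm → Tm
  | skip : Tm
  | letUnit : Tm → Tm → Tm           -- let skip = M in N
  | tt : Tm
  | ff : Tm
  | ite : Tm → Tm → Tm → Tm
  | notOp : Tm
  | andOp : Tm
  | xorOp : Tm
  | inl : Tm → Tm
  | inr : Tm → Tm
  | matchSum : Tm → Tm → Tm → Tm     -- match P with inl x ↦ M | inr y ↦ N
  | split : Tm
  | fix : Tm → Tm                    -- the fixpoint operator Y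
  | err : Tm

/-- Boolean constants as terms. -/
def ofBool : Bool → Tm
  | true => .tt
  | false => .ff

/-- Shift the free variables `≥ c` of a term by `k`. -/
def liftTm (k : ℕ) : ℕ → Tm → Tm
  | c, .var n => if n < c then .var n else .var (n + k)
  | c, .lam M => .lam (liftTm k (c+1) M)
  | c, .app M N => .app (liftTm k c M) (liftTm k c N)
  | c, .pair M N => .pair (liftTm k c M) (liftTm k c N)
  | c, .fst M => .fst (liftTm k c M)
  | c, .snd M => .snd (liftTm k c M)
  | c, .letUnit M N => .letUnit (liftTm k c M) (liftTm k c N)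
  | c, .ite P M N => .ite (liftTm k c P) (liftTm k c M) (liftTm k c N)
  | c, .inl M => .inl (liftTm k c M)
  | c, .inr M => .inr (liftTm k c M)
  | c, .matchSum P M N =>
      .matchSum (liftTm k c P) (liftTm k (c+1) M) (liftTm k (c+1) N)
  | c, .fix M => .fix (liftTm k c M)
  | _, t => t

/-- Capture-avoiding substitution of `N` for the variable `j`. -/
def subst (N : Tm) : ℕ → Tm → Tm
  | j, .var n => if n = j then liftTm j 0 N
                 else if j < n then .var (n - 1) else .var n
  | j, .lam M => .lam (subst N (j+1) M)
  | j, .app M P => .app (subst N j M) (subst N j P)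
  | j, .pair M P => .pair (subst N j M) (subst N j P)
  | j, .fst M => .fst (subst N j M)
  | j, .snd M => .snd (subst N j M)
  | j, .letUnit M P => .letUnit (subst N j M) (subst N j P)
  | j, .ite P M Q => .ite (subst N j P) (subst N j M) (subst N j Q)
  | j, .inl M => .inl (subst N j M)
  | j, .inr M => .inr (subst N j M)
  | j, .matchSum P M Q =>
      .matchSum (subst N j P) (subst N (j+1) M) (subst N (j+1) Q)
  | j, .fix M => .fix (subst N j M)
  | _, t => t

/-- First-order types. -/
inductive FirstOrder : Ty → Prop
  | bit : FirstOrder .bit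
  | prod {A B} : FirstOrder A → FirstOrder B → FirstOrder (.prod A B)
  | list {A} : FirstOrder A → FirstOrder (.list A)

/-- Type equality generated by the coercion between `[A]` and
`1 ⊕ (A × [A])`. -/
inductive TyEq : Ty → Ty → Prop
  | refl (A) : TyEq A A
  | symm {A B} : TyEq A B → TyEq B A
  | trans {A B C} : TyEq A B → TyEq B C → TyEq A C
  | fold (A) : TyEq (.sum .unit (.prod A (.list A))) (.list A)
  | arrow {A A' B B'} : TyEq A A' → TyEq B B' → TyEq (.arrow A B) (.arrow A' B')
  | prod {A A' B B'} : TyEq A A' → TyEq B B' → TyEq (.prod A B) (.prod A' B')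
  | sum {A A' B B'} : TyEq A A' → TyEq B B' → TyEq (.sum A B) (.sum A' B')
  | list {A A'} : TyEq A A' → TyEq (.list A) (.list A')

/-- Typing judgment of PCF^list (contexts are lists of types, de Bruijn). -/
inductive HasType : List Ty → Tm → Ty → Prop
  | var {Δ n A} : Δ[n]? = some A → HasType Δ (.var n) A
  | lam {Δ A B M} : HasType (A :: Δ) M B → HasType Δ (.lam M) (.arrow A B)
  | app {Δ M N A B} : HasType Δ M (.arrow A B) → HasType Δ N A →
      HasType Δ (.app M N) B
  | pair {Δ M N A B} : HasType Δ M A → HasType Δ N B →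
      HasType Δ (.pair M N) (.prod A B)
  | fst {Δ M A B} : HasType Δ M (.prod A B) → HasType Δ (.fst M) A
  | snd {Δ M A B} : HasType Δ M (.prod A B) → HasType Δ (.snd M) B
  | skip {Δ} : HasType Δ .skip .unit
  | letUnit {Δ M N B} : HasType Δ M .unit → HasType Δ N B →
      HasType Δ (.letUnit M N) B
  | tt {Δ} : HasType Δ .tt .bit
  | ff {Δ} : HasType Δ .ff .bit
  | ite {Δ P M N C} : HasType Δ P .bit → HasType Δ M C → HasType Δ N C →
      FirstOrder C → HasType Δ (.ite P M N) C
  | notOp {Δ} : HasType Δ .notOp (.arrow .bit .bit)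
  | andOp {Δ} : HasType Δ .andOp (.arrow (.prod .bit .bit) .bit)
  | xorOp {Δ} : HasType Δ .xorOp (.arrow (.prod .bit .bit) .bit)
  | inl {Δ M A B} : HasType Δ M A → HasType Δ (.inl M) (.sum A B)
  | inr {Δ M A B} : HasType Δ M B → HasType Δ (.inr M) (.sum A B)
  | matchSum {Δ P M N A B C} : HasType Δ P (.sum A B) →
      HasType (A :: Δ) M C → HasType (B :: Δ) N C →
      HasType Δ (.matchSum P M N) C
  | split {Δ A} :
      HasType Δ .split (.arrow (.list A) (.sum .unit (.prod A (.list A))))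
  | fix {Δ M A} : HasType Δ M (.arrow A A) → HasType Δ (.fix M) A
  | err {Δ A} : HasType Δ .err A
  | conv {Δ M A B} : HasType Δ M A → TyEq A B → HasType Δ M B

/-- Values. -/
inductive Value : Tm → Prop
  | lam (M) : Value (.lam M)
  | pair {M N} : Value M → Value N → Value (.pair M N)
  | inl {M} : Value M → Value (.inl M)
  | inr {M} : Value M → Value (.inr M)
  | skip : Value .skip
  | tt : Value .tt
  | ff : Value .ff
  | notOp : Value .notOp
  | andOp : Value .andOp
  | xorOp : Value .xorOp
  | split : Value .split

/-- The predicate "contains the error term Err as a subterm". -/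
inductive ContainsErr : Tm → Prop
  | err : ContainsErr .err
  | lam {M} : ContainsErr M → ContainsErr (.lam M)
  | appL {M N} : ContainsErr M → ContainsErr (.app M N)
  | appR {M N} : ContainsErr N → ContainsErr (.app M N)
  | pairL {M N} : ContainsErr M → ContainsErr (.pair M N)
  | pairR {M N} : ContainsErr N → ContainsErr (.pair M N)
  | fst {M} : ContainsErr M → ContainsErr (.fst M)
  | snd {M} : ContainsErr M → ContainsErr (.snd M)
  | letL {M N} : ContainsErr M → ContainsErr (.letUnit M N)
  | letR {M N} : ContainsErr N → ContainsErr (.letUnit M N)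
  | ite1 {P M N} : ContainsErr P → ContainsErr (.ite P M N)
  | ite2 {P M N} : ContainsErr M → ContainsErr (.ite P M N)
  | ite3 {P M N} : ContainsErr N → ContainsErr (.ite P M N)
  | inl {M} : ContainsErr M → ContainsErr (.inl M)
  | inr {M} : ContainsErr M → ContainsErr (.inr M)
  | match1 {P M N} : ContainsErr P → ContainsErr (.matchSum P M N)
  | match2 {P M N} : ContainsErr M → ContainsErr (.matchSum P M N)
  | match3 {P M N} : ContainsErr N → ContainsErr (.matchSum P M N)
  | fix {M} : ContainsErr M → ContainsErr (.fix M)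

/-- Small-step reduction of PCF^list, closed under reduction of subterms. -/
inductive Step : Tm → Tm → Prop
  | beta (M N) : Step (.app (.lam M) N) (subst N 0 M)
  | fstPair (M N) : Step (.fst (.pair M N)) M
  | sndPair (M N) : Step (.snd (.pair M N)) N
  | letU (M) : Step (.letUnit .skip M) M
  | iteTt (M N) : Step (.ite .tt M N) M
  | iteFf (M N) : Step (.ite .ff M N) N
  | splitRed (M) : Step (.app .split M) M
  | matchInl (P M N) : Step (.matchSum (.inl P) M N) (subst P 0 M)
  | matchInr (P M N) : Step (.matchSum (.inr P) M N) (subst P 0 N)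
  | fixRed (M) : Step (.fix M) (.app M (.fix M))
  | notRed (b) : Step (.app .notOp (ofBool b)) (ofBool (!b))
  | andRed (a b) : Step (.app .andOp (.pair (ofBool a) (ofBool b))) (ofBool (a && b))
  | xorRed (a b) : Step (.app .xorOp (.pair (ofBool a) (ofBool b)))
      (ofBool (Bool.xor a b))
  | lamC {M M'} : Step M M' → Step (.lam M) (.lam M')
  | appL {M M' N} : Step M M' → Step (.app M N) (.app M' N)
  | appR {M N N'} : Step N N' → Step (.app M N) (.app M N')
  | pairL {M M' N} : Step M M' → Step (.pair M N) (.pair M' N)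
  | pairR {M N N'} : Step N N' → Step (.pair M N) (.pair M N')
  | fstC {M M'} : Step M M' → Step (.fst M) (.fst M')
  | sndC {M M'} : Step M M' → Step (.snd M) (.snd M')
  | letL {M M' N} : Step M M' → Step (.letUnit M N) (.letUnit M' N)
  | letR {M N N'} : Step N N' → Step (.letUnit M N) (.letUnit M N')
  | ite1 {P P' M N} : Step P P' → Step (.ite P M N) (.ite P' M N)
  | ite2 {P M M' N} : Step M M' → Step (.ite P M N) (.ite P M' N)
  | ite3 {P M N N'} : Step N N' → Step (.ite P M N) (.ite P M N')
  | inlC {M M'} : Step M M' → Step (.inl M) (.inl M')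
  | inrC {M M'} : Step M M' → Step (.inr M) (.inr M')
  | match1 {P P' M N} : Step P P' → Step (.matchSum P M N) (.matchSum P' M N)
  | match2 {P M M' N} : Step M M' → Step (.matchSum P M N) (.matchSum P M' N)
  | match3 {P M N N'} : Step N N' → Step (.matchSum P M N) (.matchSum P M N')
  | fixC {M M'} : Step M M' → Step (.fix M) (.fix M')

/-- The type `bit^m` (right-nested products of `bit`). -/
def bitPow : ℕ → Ty
  | 0 => .unit
  | 1 => .bit
  | n + 2 => .prod .bit (bitPow (n + 1))

/-! ## The circuit-generating abstract machine

The state of the machine is a term `M` (whose free variables, the linked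
variables `p₀, p₁, …`, appear at depth `d` as de Bruijn indices `d + j`),
a raw circuit `C` (a list of gates, most recent first, so that the circuit
is executed in reverse list order), an input wire set `I`, and a linking
function `L : List ℕ` mapping the machine variable `j` to the wire `L[j]`. -/

/-- Execution of a machine circuit: the gates of `C` are executed in
reverse list order (gates are prepended as they are generated). -/
def runCircuit (C : List Gate) (v : ℕ → Bool) : ℕ → Bool :=
  C.foldr execGate v

/-- A wire is fresh for the machine state when it is neither an input wire,
nor a wire of the circuit, nor in the range of the linking function. -/
def FreshWire (I : Finset ℕ) (C : List Gate) (L : List ℕ) (w : ℕ) : Prop :=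
  w ∉ I ∧ w ∉ circuitWires C ∧ w ∉ L

/-- First-order extensions of the linking function `L`, at depth `d`:
linked variables, products of extensions, and lists of extensions. -/
inductive FOExt (d : ℕ) (L : List ℕ) : Tm → Prop
  | var {j} : j < L.length → FOExt d L (.var (d + j))
  | pair {M N} : FOExt d L M → FOExt d L N → FOExt d L (.pair M N)
  | nil : FOExt d L (.inl .skip)
  | cons {M N} : FOExt d L M → FOExt d L N → FOExt d L (.inr (.pair M N))

/-- `IteAux d L n V W U n' ps` : the branches `V` and `W` are first-order
extensions of `L` with the same shape; `U` is the first-order extension of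
the same shape whose variables are the fresh machine variables
`n, n+1, …, n'-1` (pairwise distinct, occurring at depth `d`), and `ps`
collects, in order, the pairs of wires of the corresponding variables of
`V` and `W`. -/
inductive IteAux (d : ℕ) (L : List ℕ) : ℕ → Tm → Tm → Tm → ℕ → List (ℕ × ℕ) → Prop
  | var {n j k} (hj : j < L.length) (hk : k < L.length) :
      IteAux d L n (.var (d + j)) (.var (d + k)) (.var (d + n)) (n + 1)
        [(L.getD j 0, L.getD k 0)]
  | pair {n V₁ W₁ U₁ n₁ p₁ V₂ W₂ U₂ n₂ p₂} :
      IteAux d L n V₁ W₁ U₁ n₁ p₁ → IteAux d L n₁ V₂ W₂ U₂ n₂ p₂ →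
      IteAux d L n (.pair V₁ V₂) (.pair W₁ W₂) (.pair U₁ U₂) n₂ (p₁ ++ p₂)
  | nil {n} : IteAux d L n (.inl .skip) (.inl .skip) (.inl .skip) n []
  | cons {n V₁ W₁ U₁ n₁ p₁ V₂ W₂ U₂ n₂ p₂} :
      IteAux d L n V₁ W₁ U₁ n₁ p₁ → IteAux d L n₁ V₂ W₂ U₂ n₂ p₂ →
      IteAux d L n (.inr (.pair V₁ V₂)) (.inr (.pair W₁ W₂))
        (.inr (.pair U₁ U₂)) n₂ (p₁ ++ p₂)

/-- The gates generated by an if-then-else on the wire `pw`: for each fresh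
wire `u` and corresponding pair `(a, b)` of wires of the two branches, the
gates CNOT(u; (pw,true),(a,true)) and CNOT(u; (pw,false),(b,true)),
in generation order. -/
def iteGates (pw : ℕ) : List ℕ → List (ℕ × ℕ) → List Gate
  | u :: us, (a, b) :: ps =>
      ⟨u, [(pw, true), (a, true)]⟩ :: ⟨u, [(pw, false), (b, true)]⟩ ::
        iteGates pw us ps
  | _, _ => []

/-- The rewrite relation `→_am` on circuit-generating abstract machines.
`AMStep I d M C L N C' L'` : at binder depth `d`, the machine
`(M, (I, C), L)` rewrites to `(N, (I, C'), L')`.  The generic rules leave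
the circuit untouched; the rules for booleans record gates in the circuit
and allocate fresh wires; the relation is closed under arbitrary
beta-contexts. -/
inductive AMStep (I : Finset ℕ) : ℕ → Tm → List Gate → List ℕ →
    Tm → List Gate → List ℕ → Prop
  /- generic rules -/
  | beta (d M N C L) : AMStep I d (.app (.lam M) N) C L (subst N 0 M) C L
  | fstPair (d M N C L) : AMStep I d (.fst (.pair M N)) C L M C L
  | sndPair (d M N C L) : AMStep I d (.snd (.pair M N)) C L N C L
  | letU (d M C L) : AMStep I d (.letUnit .skip M) C L M C L
  | splitRed (d M C L) : AMStep I d (.app .split M) C L M C L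
  | matchInl (d P M N C L) :
      AMStep I d (.matchSum (.inl P) M N) C L (subst P 0 M) C L
  | matchInr (d P M N C L) :
      AMStep I d (.matchSum (.inr P) M N) C L (subst P 0 N) C L
  | fixRed (d M C L) : AMStep I d (.fix M) C L (.app M (.fix M)) C L
  /- rules for booleans -/
  | ffRed (d C L w) (hw : FreshWire I C L w) :
      AMStep I d .ff C L (.var (d + L.length)) C (L ++ [w])
  | ttRed (d C L w) (hw : FreshWire I C L w) :
      AMStep I d .tt C L (.var (d + L.length)) (⟨w, []⟩ :: C) (L ++ [w])
  | notRed (d C L j w) (hj : j < L.length) (hw : FreshWire I C L w) :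
      AMStep I d (.app .notOp (.var (d + j))) C L (.var (d + L.length))
        (⟨w, [(L.getD j 0, false)]⟩ :: C) (L ++ [w])
  | andRed (d C L j k w) (hj : j < L.length) (hk : k < L.length)
      (hw : FreshWire I C L w) :
      AMStep I d (.app .andOp (.pair (.var (d + j)) (.var (d + k)))) C L
        (.var (d + L.length))
        (⟨w, [(L.getD j 0, true), (L.getD k 0, true)]⟩ :: C) (L ++ [w])
  | xorRed (d C L j k w) (hj : j < L.length) (hk : k < L.length)
      (hw : FreshWire I C L w) :
      AMStep I d (.app .xorOp (.pair (.var (d + j)) (.var (d + k)))) C L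
        (.var (d + L.length))
        (⟨w, [(L.getD j 0, true)]⟩ :: ⟨w, [(L.getD k 0, true)]⟩ :: C)
        (L ++ [w])
  | iteRed (d C L j V W U n ps ws) (hj : j < L.length)
      (ha : IteAux d L L.length V W U n ps)
      (hlen : ws.length = ps.length) (hnd : ws.Nodup)
      (hfr : ∀ w ∈ ws, FreshWire I C L w) :
      AMStep I d (.ite (.var (d + j)) V W) C L
        U ((iteGates (L.getD j 0) ws ps).reverse ++ C) (L ++ ws)
  | iteErr (d C L j V W) (hj : j < L.length)
      (hV : FOExt d L V) (hW : FOExt d L W)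
      (hns : ¬ ∃ U n ps, IteAux d L L.length V W U n ps) :
      AMStep I d (.ite (.var (d + j)) V W) C L .err C L
  /- closure under beta-contexts -/
  | lamC {d M C L M' C' L'} : AMStep I (d+1) M C L M' C' L' →
      AMStep I d (.lam M) C L (.lam M') C' L'
  | appL {d M C L M' C' L'} (N) : AMStep I d M C L M' C' L' →
      AMStep I d (.app M N) C L (.app M' N) C' L'
  | appR {d N C L N' C' L'} (M) : AMStep I d N C L N' C' L' →
      AMStep I d (.app M N) C L (.app M N') C' L'
  | pairL {d M C L M' C' L'} (N) : AMStep I d M C L M' C' L' →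
      AMStep I d (.pair M N) C L (.pair M' N) C' L'
  | pairR {d N C L N' C' L'} (M) : AMStep I d N C L N' C' L' →
      AMStep I d (.pair M N) C L (.pair M N') C' L'
  | fstC {d M C L M' C' L'} : AMStep I d M C L M' C' L' →
      AMStep I d (.fst M) C L (.fst M') C' L'
  | sndC {d M C L M' C' L'} : AMStep I d M C L M' C' L' →
      AMStep I d (.snd M) C L (.snd M') C' L'
  | letL {d M C L M' C' L'} (N) : AMStep I d M C L M' C' L' →
      AMStep I d (.letUnit M N) C L (.letUnit M' N) C' L'
  | letR {d N C L N' C' L'} (M) : AMStep I d N C L N' C' L' →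
      AMStep I d (.letUnit M N) C L (.letUnit M N') C' L'
  | ite1 {d P C L P' C' L'} (M N) : AMStep I d P C L P' C' L' →
      AMStep I d (.ite P M N) C L (.ite P' M N) C' L'
  | ite2 {d M C L M' C' L'} (P N) : AMStep I d M C L M' C' L' →
      AMStep I d (.ite P M N) C L (.ite P M' N) C' L'
  | ite3 {d N C L N' C' L'} (P M) : AMStep I d N C L N' C' L' →
      AMStep I d (.ite P M N) C L (.ite P M N') C' L'
  | inlC {d M C L M' C' L'} : AMStep I d M C L M' C' L' →
      AMStep I d (.inl M) C L (.inl M') C' L'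
  | inrC {d M C L M' C' L'} : AMStep I d M C L M' C' L' →
      AMStep I d (.inr M) C L (.inr M') C' L'
  | match1 {d P C L P' C' L'} (M N) : AMStep I d P C L P' C' L' →
      AMStep I d (.matchSum P M N) C L (.matchSum P' M N) C' L'
  | match2 {d M C L M' C' L'} (P N) : AMStep I (d+1) M C L M' C' L' →
      AMStep I d (.matchSum P M N) C L (.matchSum P M' N) C' L'
  | match3 {d N C L N' C' L'} (P M) : AMStep I (d+1) N C L N' C' L' →
      AMStep I d (.matchSum P M N) C L (.matchSum P M N') C' L'
  | fixC {d M C L M' C' L'} : AMStep I d M C L M' C' L' →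
      AMStep I d (.fix M) C L (.fix M') C' L'

/-- `→_am` on machine states (term, circuit, linking function), at top
level (depth 0). -/
def AMStepT (I : Finset ℕ) (s t : Tm × List Gate × List ℕ) : Prop :=
  AMStep I 0 s.1 s.2.1 s.2.2 t.1 t.2.1 t.2.2

/-- The valuation on which a machine circuit with input wires `I` is
executed: the input `u` on `I`, false elsewhere. -/
def initVal (I : Finset ℕ) (u : ℕ → Bool) : ℕ → Bool :=
  fun w => if w ∈ I then u w else false

/-- Substitute, at depth `d`, each linked variable (de Bruijn index
`d + j`) by the boolean constant `vals[j]`. -/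
def substAll (vals : List Bool) : ℕ → Tm → Tm
  | d, .var n => if n < d then .var n
                 else if n - d < vals.length then ofBool (vals.getD (n - d) false)
                 else .var n
  | d, .lam M => .lam (substAll vals (d+1) M)
  | d, .app M N => .app (substAll vals d M) (substAll vals d N)
  | d, .pair M N => .pair (substAll vals d M) (substAll vals d N)
  | d, .fst M => .fst (substAll vals d M)
  | d, .snd M => .snd (substAll vals d M)
  | d, .letUnit M N => .letUnit (substAll vals d M) (substAll vals d N)
  | d, .ite P M N => .ite (substAll vals d P) (substAll vals d M) (substAll vals d N)
  | d, .inl M => .inl (substAll vals d M)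
  | d, .inr M => .inr (substAll vals d M)
  | d, .matchSum P M N =>
      .matchSum (substAll vals d P) (substAll vals (d+1) M) (substAll vals (d+1) N)
  | d, .fix M => .fix (substAll vals d M)
  | _, t => t

/-- `T(M, (I,C), L)(u)` : the term `M` where each linked variable `x` is
replaced by the boolean obtained at wire `L(x)` by executing the circuit
`(I, C, Range L)` on the input `u`. -/
def Tfun (M : Tm) (C : List Gate) (L : List ℕ) (v : ℕ → Bool) : Tm :=
  substAll (L.map fun w => runCircuit C v w) 0 M


/-! ## Helper lemmas -/

lemma execGate_ne {g : Gate} {v : ℕ → Bool} {l : ℕ} (h : l ≠ g.active) :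
    execGate g v l = v l := by simp [execGate, h]

lemma runCircuit_cons (g : Gate) (C : List Gate) (v : ℕ → Bool) :
    runCircuit (g :: C) v = execGate g (runCircuit C v) := rfl

lemma runCircuit_append (C₁ C₂ : List Gate) (v : ℕ → Bool) :
    runCircuit (C₁ ++ C₂) v = runCircuit C₁ (runCircuit C₂ v) := by
  simp [runCircuit, List.foldr_append]

lemma runCircuit_noActive {D : List Gate} {w : ℕ} (h : ∀ g ∈ D, g.active ≠ w)
    (v : ℕ → Bool) : runCircuit D v w = v w := by
  induction D with
  | nil => rfl
  | cons g D ih =>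
      rw [runCircuit_cons, execGate_ne (Ne.symm (h g (by simp)))]
      exact ih (fun g' hg' => h g' (by simp [hg'])) 

lemma notMem_active {C : List Gate} {w : ℕ} (h : w ∉ circuitWires C) :
    ∀ g ∈ C, g.active ≠ w := by
  intro g hg e
  exact h ⟨g, hg, by simp [Gate.wires, e]⟩

lemma runCircuit_fresh {C : List Gate} {w : ℕ} (h : w ∉ circuitWires C)
    (v : ℕ → Bool) : runCircuit C v w = v w :=
  runCircuit_noActive (notMem_active h) v

lemma fresh_val {I : Finset ℕ} {C : List Gate} {L : List ℕ} {w : ℕ}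
    (hw : FreshWire I C L w) (u : ℕ → Bool) :
    runCircuit C (initVal I u) w = false := by
  rw [runCircuit_fresh hw.2.1]; simp [initVal, hw.1]

lemma getD_map {f : ℕ → Bool} {l : List ℕ} {j : ℕ} (h : j < l.length) :
    (l.map f).getD j false = f (l.getD j 0) := by
  rw [List.getD_eq_getElem _ _ (by simpa using h), List.getD_eq_getElem _ _ h,
    List.getElem_map]

lemma getD_append_r {α : Type} (l₁ l₂ : List α) (i : ℕ) (d : α) :
    (l₁ ++ l₂).getD (l₁.length + i) d = l₂.getD i d := by
  simp [List.getD_eq_getElem?_getD, List.getElem?_append_right]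

lemma getD_mem {L : List ℕ} {j : ℕ} (h : j < L.length) : L.getD j 0 ∈ L := by
  rw [List.getD_eq_getElem _ _ h]; exact List.getElem_mem _

/-- All free variables of a term are `< k`. -/
def FVB : ℕ → Tm → Prop
  | k, .var n => n < k
  | k, .lam M => FVB (k+1) M
  | k, .app M N => FVB k M ∧ FVB k N
  | k, .pair M N => FVB k M ∧ FVB k N
  | k, .fst M => FVB k M
  | k, .snd M => FVB k M
  | k, .letUnit M N => FVB k M ∧ FVB k N
  | k, .ite P M N => FVB k P ∧ FVB k M ∧ FVB k N
  | k, .inl M => FVB k M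
  | k, .inr M => FVB k M
  | k, .matchSum P M N => FVB k P ∧ FVB (k+1) M ∧ FVB (k+1) N
  | k, .fix M => FVB k M
  | _, _ => True

lemma hasType_fvb {Δ : List Ty} {M : Tm} {A : Ty} (h : HasType Δ M A) :
    FVB Δ.length M := by
  induction h with
  | var h => obtain ⟨hl, _⟩ := List.getElem?_eq_some_iff.mp h; exact hl
  | _ => simp_all [FVB]

lemma substAll_extend (vals extra : List Bool) :
    ∀ (M : Tm) (d : ℕ), FVB (d + vals.length) M →
      substAll (vals ++ extra) d M = substAll vals d M := by
  intro M
  induction M with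
  | var n =>
      intro d h
      simp only [FVB] at h
      by_cases h1 : n < d
      · simp [substAll, h1]
      · have h2 : n - d < vals.length := by omega
        have h3 : n - d < (vals ++ extra).length := by simp; omega
        simp only [substAll, if_neg h1]
        rw [if_pos h3, if_pos h2, List.getD_append _ _ _ _ h2]
  | lam M ih =>
      intro d h
      simp only [FVB] at h
      have h' : FVB (d + 1 + vals.length) M := by
        rwa [show d + 1 + vals.length = d + vals.length + 1 from by omega]
      simp [substAll, ih (d+1) h']
  | matchSum P M N ihP ihM ihN =>
      intro d h
      simp only [FVB] at h
      have hM : FVB (d + 1 + vals.length) M := by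
        rw [show d + 1 + vals.length = d + vals.length + 1 from by omega]; exact h.2.1
      have hN : FVB (d + 1 + vals.length) N := by
        rw [show d + 1 + vals.length = d + vals.length + 1 from by omega]; exact h.2.2
      simp [substAll, ihP d h.1, ihM (d+1) hM, ihN (d+1) hN]
  | app M N ihM ihN => intro d h; simp only [FVB] at h
                       simp [substAll, ihM d h.1, ihN d h.2]
  | pair M N ihM ihN => intro d h; simp only [FVB] at h
                        simp [substAll, ihM d h.1, ihN d h.2]
  | fst M ih => intro d h; simp only [FVB] at h; simp [substAll, ih d h]
  | snd M ih => intro d h; simp only [FVB] at h; simp [substAll, ih d h]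
  | letUnit M N ihM ihN => intro d h; simp only [FVB] at h
                           simp [substAll, ihM d h.1, ihN d h.2]
  | ite P M N ihP ihM ihN => intro d h; simp only [FVB] at h
                             simp [substAll, ihP d h.1, ihM d h.2.1, ihN d h.2.2]
  | inl M ih => intro d h; simp only [FVB] at h; simp [substAll, ih d h]
  | inr M ih => intro d h; simp only [FVB] at h; simp [substAll, ih d h]
  | fix M ih => intro d h; simp only [FVB] at h; simp [substAll, ih d h]
  | _ => intro d h; rfl

lemma liftTm_ofBool (k c : ℕ) (b : Bool) : liftTm k c (ofBool b) = ofBool b := by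
  cases b <;> rfl

lemma subst_ofBool (N : Tm) (j : ℕ) (b : Bool) : subst N j (ofBool b) = ofBool b := by
  cases b <;> rfl

lemma substAll_ofBool (vals : List Bool) (d : ℕ) (b : Bool) :
    substAll vals d (ofBool b) = ofBool b := by
  cases b <;> rfl

lemma substAll_linkvar {vals : List Bool} {d n : ℕ} (h : n < vals.length) :
    substAll vals d (.var (d + n)) = ofBool (vals.getD n false) := by
  have h1 : ¬ d + n < d := by omega
  have h2 : d + n - d = n := by omega
  simp [substAll, h1, h2, h]
lemma substAll_lift (vals : List Bool) (k : ℕ) :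
    ∀ (M : Tm) (c dd : ℕ), c ≤ dd →
      substAll vals (dd + k) (liftTm k c M) = liftTm k c (substAll vals dd M) := by
  intro M
  induction M with
  | var n =>
      intro c dd hc
      by_cases h1 : n < c
      · have h2 : n < dd := by omega
        simp [liftTm, substAll, h1, h2, show n < dd + k from by omega]
      · by_cases h2 : n < dd
        · simp [liftTm, substAll, h1, h2, show n + k < dd + k from by omega]
        · have e : n + k - (dd + k) = n - dd := by omega
          by_cases h3 : n - dd < vals.length
          · simp only [liftTm, if_neg h1, substAll, if_neg h2,
              if_neg (show ¬ n + k < dd + k from by omega), e, if_pos h3]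
            rw [liftTm_ofBool]
          · simp [liftTm, substAll, h1, h2, e, h3,
              show ¬ n + k < dd + k from by omega]
  | lam M ih =>
      intro c dd hc
      simp only [liftTm, substAll]
      rw [show dd + k + 1 = dd + 1 + k from by omega, ih (c+1) (dd+1) (by omega)]
  | matchSum P M N ihP ihM ihN =>
      intro c dd hc
      simp only [liftTm, substAll]
      rw [show dd + k + 1 = dd + 1 + k from by omega, ihP c dd hc,
        ihM (c+1) (dd+1) (by omega), ihN (c+1) (dd+1) (by omega)]
  | app M N ihM ihN => intro c dd hc; simp [liftTm, substAll, ihM c dd hc, ihN c dd hc]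
  | pair M N ihM ihN => intro c dd hc; simp [liftTm, substAll, ihM c dd hc, ihN c dd hc]
  | fst M ih => intro c dd hc; simp [liftTm, substAll, ih c dd hc]
  | snd M ih => intro c dd hc; simp [liftTm, substAll, ih c dd hc]
  | letUnit M N ihM ihN => intro c dd hc; simp [liftTm, substAll, ihM c dd hc, ihN c dd hc]
  | ite P M N ihP ihM ihN =>
      intro c dd hc; simp [liftTm, substAll, ihP c dd hc, ihM c dd hc, ihN c dd hc]
  | inl M ih => intro c dd hc; simp [liftTm, substAll, ih c dd hc]
  | inr M ih => intro c dd hc; simp [liftTm, substAll, ih c dd hc]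
  | fix M ih => intro c dd hc; simp [liftTm, substAll, ih c dd hc]
  | _ => intro c dd hc; rfl

lemma substAll_subst (vals : List Bool) (N : Tm) :
    ∀ (M : Tm) (j e : ℕ),
      substAll vals (e + j) (subst N j M)
        = subst (substAll vals e N) j (substAll vals (e + j + 1) M) := by
  intro M
  induction M with
  | var n =>
      intro j e
      by_cases h1 : n = j
      · subst h1
        have h2 : n < e + n + 1 := by omega
        simp only [subst, if_pos rfl, substAll, if_pos h2]
        exact substAll_lift vals n N 0 e (by omega)
      · by_cases h2 : j < n
        · by_cases h3 : n < e + j + 1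
          · have h4 : n - 1 < e + j := by omega
            simp [subst, substAll, h1, h2, h3, h4]
          · have h4 : ¬ n - 1 < e + j := by omega
            have e1 : n - 1 - (e + j) = n - (e + j + 1) := by omega
            by_cases h5 : n - (e + j + 1) < vals.length
            · simp only [subst, if_neg h1, if_pos h2, substAll, if_neg h4,
                if_neg h3, e1, if_pos h5]
              rw [subst_ofBool]
            · simp [subst, substAll, h1, h2, h3, h4, e1, h5]
        · have h3 : n < j := by omega
          simp [subst, substAll, h1, h2, show n < e + j from by omega,
            show n < e + j + 1 from by omega, show ¬ j < n from by omega]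
  | lam M ih =>
      intro j e
      simp only [subst, substAll]
      rw [show e + j + 1 = e + (j + 1) from by omega, ih (j+1) e]
  | matchSum P M Q ihP ihM ihQ =>
      intro j e
      simp only [subst, substAll]
      rw [ihP j e, show e + j + 1 = e + (j + 1) from by omega, ihM (j+1) e, ihQ (j+1) e]
  | app M N ihM ihN => intro j e; simp [subst, substAll, ihM j e, ihN j e]
  | pair M N ihM ihN => intro j e; simp [subst, substAll, ihM j e, ihN j e]
  | fst M ih => intro j e; simp [subst, substAll, ih j e]
  | snd M ih => intro j e; simp [subst, substAll, ih j e]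
  | letUnit M N ihM ihN => intro j e; simp [subst, substAll, ihM j e, ihN j e]
  | ite P M Q ihP ihM ihQ => intro j e; simp [subst, substAll, ihP j e, ihM j e, ihQ j e]
  | inl M ih => intro j e; simp [subst, substAll, ih j e]
  | inr M ih => intro j e; simp [subst, substAll, ih j e]
  | fix M ih => intro j e; simp [subst, substAll, ih j e]
  | _ => intro j e; rfl

lemma substAll_subst0 (vals : List Bool) (N M : Tm) (d : ℕ) :
    substAll vals d (subst N 0 M) = subst (substAll vals d N) 0 (substAll vals (d+1) M) :=
  substAll_subst vals N M 0 d
lemma iteGates_active (pw : ℕ) :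
    ∀ (ws : List ℕ) (ps : List (ℕ × ℕ)), ∀ g ∈ iteGates pw ws ps, g.active ∈ ws := by
  intro ws
  induction ws with
  | nil => intro ps g hg; simp [iteGates] at hg
  | cons u us ih =>
      intro ps g hg
      cases ps with
      | nil => simp [iteGates] at hg
      | cons p ps =>
          obtain ⟨a, b⟩ := p
          simp only [iteGates, List.mem_cons] at hg
          rcases hg with rfl | rfl | hg
          · simp
          · simp
          · simp [ih ps g hg]

lemma execGate2 (w pw1 c1 : ℕ) (b1 : Bool) (v : ℕ → Bool) :
    execGate ⟨w, [(pw1, b1), (c1, true)]⟩ v w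
      = Bool.xor (v w) ((Bool.xor (v pw1) (Bool.xor b1 true)) && v c1) := by
  simp [execGate, ctrlVal]

lemma iteGates_run (pw : ℕ) :
    ∀ (ws : List ℕ) (ps : List (ℕ × ℕ)) (v : ℕ → Bool),
      ws.length = ps.length → ws.Nodup →
      (∀ w ∈ ws, v w = false ∧ w ≠ pw ∧ ∀ p ∈ ps, w ≠ p.1 ∧ w ≠ p.2) →
      (∀ x, x ∉ ws → runCircuit (iteGates pw ws ps).reverse v x = v x) ∧
      (∀ i, i < ws.length →
        runCircuit (iteGates pw ws ps).reverse v (ws.getD i 0) =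
          if v pw then v ((ps.getD i (0,0)).1) else v ((ps.getD i (0,0)).2)) := by
  intro ws
  induction ws with
  | nil =>
      intro ps v _ _ _
      refine ⟨fun x _ => rfl, fun i hi => by simp at hi⟩
  | cons u us ih =>
      intro ps v hlen hnd hfr
      cases ps with
      | nil => simp at hlen
      | cons p ps =>
          obtain ⟨a, b⟩ := p
          obtain ⟨hu0, hupw, hups⟩ := hfr u (by simp)
          have hua : u ≠ a := (hups (a,b) (by simp)).1
          have hub : u ≠ b := (hups (a,b) (by simp)).2
          have hnd' := List.nodup_cons.mp hnd
          set g1 : Gate := ⟨u, [(pw, true), (a, true)]⟩ with hg1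
          set g2 : Gate := ⟨u, [(pw, false), (b, true)]⟩ with hg2
          set v1 : ℕ → Bool := execGate g2 (execGate g1 v) with hv1def
          have hrun : ∀ x, runCircuit (iteGates pw (u::us) ((a,b)::ps)).reverse v x
              = runCircuit (iteGates pw us ps).reverse v1 x := by
            intro x
            have : (iteGates pw (u::us) ((a,b)::ps)).reverse
                = (iteGates pw us ps).reverse ++ [g2, g1] := by
              simp [iteGates, hg1, hg2]
            rw [this, runCircuit_append]
            rfl
          have hv1ne : ∀ x, x ≠ u → v1 x = v x := by
            intro x hx
            rw [hv1def, execGate_ne hx, execGate_ne hx]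
          have hv1u : v1 u = (if v pw then v a else v b) := by
            have epw : execGate g1 v pw = v pw := execGate_ne (Ne.symm hupw)
            have eb : execGate g1 v b = v b := execGate_ne (Ne.symm hub)
            have e1 : execGate g1 v u
                = Bool.xor (v u) ((Bool.xor (v pw) (Bool.xor true true)) && v a) :=
              execGate2 u pw a true v
            have e2 : v1 u = Bool.xor (execGate g1 v u)
                ((Bool.xor (execGate g1 v pw) (Bool.xor false true)) && execGate g1 v b) :=
              execGate2 u pw b false (execGate g1 v)
            rw [e2, e1, epw, eb, hu0]
            cases v pw <;> cases v a <;> cases v b <;> rfl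
          have hfr' : ∀ w ∈ us, v1 w = false ∧ w ≠ pw ∧ ∀ q ∈ ps, w ≠ q.1 ∧ w ≠ q.2 := by
            intro w hw
            obtain ⟨h0, h1, h2⟩ := hfr w (by simp [hw])
            have hwu : w ≠ u := by rintro rfl; exact hnd'.1 hw
            exact ⟨(hv1ne w hwu).trans h0, h1, fun q hq => h2 q (by simp [hq])⟩
          obtain ⟨ihA, ihB⟩ := ih ps v1 (by simpa using hlen) hnd'.2 hfr'
          constructor
          · intro x hx
            rw [hrun, ihA x (fun h => hx (by simp [h])),
              hv1ne x (fun h => hx (by simp [h]))]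
          · intro i hi
            cases i with
            | zero =>
                have : runCircuit (iteGates pw us ps).reverse v1 u = v1 u :=
                  ihA u hnd'.1
                rw [show (u::us).getD 0 0 = u from rfl, hrun, this, hv1u]
                rfl
            | succ i' =>
                have hi' : i' < us.length := by simpa using hi
                have hips : ps.getD i' (0,0) ∈ ps := by
                  have : i' < ps.length := by
                    have := hlen; simp at this; omega
                  rw [List.getD_eq_getElem _ _ this]; exact List.getElem_mem _
                have hp := hups (ps.getD i' (0,0)) (List.mem_cons_of_mem _ hips)
                have e1 : v1 pw = v pw := hv1ne pw (Ne.symm hupw)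
                have e2 : v1 (ps.getD i' (0,0)).1 = v (ps.getD i' (0,0)).1 :=
                  hv1ne _ (Ne.symm hp.1)
                have e3 : v1 (ps.getD i' (0,0)).2 = v (ps.getD i' (0,0)).2 :=
                  hv1ne _ (Ne.symm hp.2)
                rw [show (u::us).getD (i'+1) 0 = us.getD i' 0 from rfl, hrun,
                  ihB i' hi',
                  show ((a,b)::ps).getD (i'+1) (0,0) = ps.getD i' (0,0) from rfl,
                  e1, e2, e3]
lemma iteaux_len {d : ℕ} {L : List ℕ} :
    ∀ {n V W U n' ps}, IteAux d L n V W U n' ps → n' = n + ps.length := by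
  intro n V W U n' ps h
  induction h with
  | var hj hk => simp
  | pair h1 h2 ih1 ih2 => simp [ih1, ih2]; omega
  | nil => simp
  | cons h1 h2 ih1 ih2 => simp [ih1, ih2]; omega

lemma iteaux_mem {d : ℕ} {L : List ℕ} :
    ∀ {n V W U n' ps}, IteAux d L n V W U n' ps → ∀ p ∈ ps, p.1 ∈ L ∧ p.2 ∈ L := by
  intro n V W U n' ps h
  induction h with
  | @var n j k hj hk =>
      intro p hp
      rcases List.mem_singleton.mp hp with rfl
      exact ⟨getD_mem hj, getD_mem hk⟩
  | pair h1 h2 ih1 ih2 =>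
      intro p hp
      rcases List.mem_append.mp hp with h | h
      · exact ih1 p h
      · exact ih2 p h
  | nil => intro p hp; simp at hp
  | cons h1 h2 ih1 ih2 =>
      intro p hp
      rcases List.mem_append.mp hp with h | h
      · exact ih1 p h
      · exact ih2 p h

lemma iteaux_subst {d : ℕ} {L : List ℕ} (bp : Bool) (vals vals'' : List Bool)
    (v₀ : ℕ → Bool) (hvlen : vals.length = L.length)
    (hv : ∀ j, j < L.length → vals.getD j false = v₀ (L.getD j 0)) :
    ∀ {n V W U n' ps}, IteAux d L n V W U n' ps →
      n' ≤ vals''.length →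
      (∀ i, i < ps.length → vals''.getD (n+i) false
        = if bp then v₀ ((ps.getD i (0,0)).1) else v₀ ((ps.getD i (0,0)).2)) →
      substAll vals'' d U = substAll vals d (if bp then V else W) := by
  intro n V W U n' ps h
  induction h with
  | @var n j k hj hk =>
      intro hle hvals
      have h0 := hvals 0 (by simp)
      simp only [List.getD_cons_zero, Nat.add_zero] at h0
      rw [substAll_linkvar (show n < vals''.length from by omega), h0]
      cases bp
      · simp only [Bool.false_eq_true, if_false]
        rw [substAll_linkvar (show k < vals.length from by omega), hv k hk]
      · simp only [if_true]
        rw [substAll_linkvar (show j < vals.length from by omega), hv j hj]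
  | @pair n V₁ W₁ U₁ n₁ p₁ V₂ W₂ U₂ n₂ p₂ h1 h2 ih1 ih2 =>
      intro hle hvals
      have hl1 := iteaux_len h1
      have hl2 := iteaux_len h2
      have e1 : substAll vals'' d U₁ = substAll vals d (if bp then V₁ else W₁) := by
        refine ih1 (by omega) ?_
        intro i hi
        have := hvals i (by simp; omega)
        rwa [List.getD_append _ _ _ _ hi] at this
      have e2 : substAll vals'' d U₂ = substAll vals d (if bp then V₂ else W₂) := by
        refine ih2 (by omega) ?_
        intro i hi
        have := hvals (p₁.length + i) (by simp; omega)
        rwa [getD_append_r, show n + (p₁.length + i) = n₁ + i from by omega] at this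
      cases bp <;> simp_all [substAll]
  | nil =>
      intro _ _
      cases bp <;> rfl
  | @cons n V₁ W₁ U₁ n₁ p₁ V₂ W₂ U₂ n₂ p₂ h1 h2 ih1 ih2 =>
      intro hle hvals
      have hl1 := iteaux_len h1
      have hl2 := iteaux_len h2
      have e1 : substAll vals'' d U₁ = substAll vals d (if bp then V₁ else W₁) := by
        refine ih1 (by omega) ?_
        intro i hi
        have := hvals i (by simp; omega)
        rwa [List.getD_append _ _ _ _ hi] at this
      have e2 : substAll vals'' d U₂ = substAll vals d (if bp then V₂ else W₂) := by
        refine ih2 (by omega) ?_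
        intro i hi
        have := hvals (p₁.length + i) (by simp; omega)
        rwa [getD_append_r, show n + (p₁.length + i) = n₁ + i from by omega] at this
      cases bp <;> simp_all [substAll]

lemma am_extend {I : Finset ℕ} {d : ℕ} {M : Tm} {C : List Gate} {L : List ℕ}
    {N : Tm} {C' : List Gate} {L' : List ℕ} (h : AMStep I d M C L N C' L') :
    ∃ E D, L' = L ++ E ∧ C' = D ++ C ∧ ∀ g ∈ D, g.active ∉ L := by
  induction h
  case ffRed d C L w hw => exact ⟨[w], [], rfl, by simp, by simp⟩
  case ttRed d C L w hw =>
    exact ⟨[w], [⟨w, []⟩], rfl, rfl, by simpa using hw.2.2⟩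
  case notRed d C L j w hj hw =>
    exact ⟨[w], [⟨w, [(L.getD j 0, false)]⟩], rfl, rfl, by simpa using hw.2.2⟩
  case andRed d C L j k w hj hk hw =>
    exact ⟨[w], [⟨w, [(L.getD j 0, true), (L.getD k 0, true)]⟩], rfl, rfl,
      by simpa using hw.2.2⟩
  case xorRed d C L j k w hj hk hw =>
    refine ⟨[w], [⟨w, [(L.getD j 0, true)]⟩, ⟨w, [(L.getD k 0, true)]⟩], rfl, rfl, ?_⟩
    intro g hg
    rcases List.mem_cons.mp hg with rfl | hg
    · exact hw.2.2
    · rcases List.mem_singleton.mp hg with rfl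
      exact hw.2.2
  case iteRed d C L j V W U n ps ws hj ha hlen hnd hfr =>
    refine ⟨ws, (iteGates (L.getD j 0) ws ps).reverse, rfl, rfl, ?_⟩
    intro g hg
    exact (hfr _ (iteGates_active _ _ _ g (List.mem_reverse.mp hg))).2.2
  all_goals first
    | assumption
    | exact ⟨[], [], by simp, by simp, by simp⟩

lemma am_vals_prefix {I : Finset ℕ} {d : ℕ} {M : Tm} {C : List Gate} {L : List ℕ}
    {N : Tm} {C' : List Gate} {L' : List ℕ} (h : AMStep I d M C L N C' L')
    (v : ℕ → Bool) :
    ∃ extra, L'.map (runCircuit C' v) = L.map (runCircuit C v) ++ extra := by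
  obtain ⟨E, D, hL, hC, hD⟩ := am_extend h
  refine ⟨E.map (runCircuit C' v), ?_⟩
  rw [hL, List.map_append]
  congr 1
  apply List.map_congr_left
  intro w hw
  rw [hC, runCircuit_append]
  exact runCircuit_noActive (fun g hg e => hD g hg (e ▸ hw)) _
lemma execGate1 (w c1 : ℕ) (b1 : Bool) (v : ℕ → Bool) :
    execGate ⟨w, [(c1, b1)]⟩ v w
      = Bool.xor (v w) (Bool.xor (v c1) (Bool.xor b1 true)) := by
  simp [execGate, ctrlVal]

lemma vals_new (C : List Gate) (L ws : List ℕ) (v : ℕ → Bool) {i : ℕ}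
    (hi : i < ws.length) :
    ((L ++ ws).map (runCircuit C v)).getD (L.length + i) false
      = runCircuit C v (ws.getD i 0) := by
  rw [getD_map (by simp; omega)]
  congr 1
  exact getD_append_r L ws i 0

lemma vals_single (C : List Gate) (L : List ℕ) (w : ℕ) (v : ℕ → Bool) :
    ((L ++ [w]).map (runCircuit C v)).getD L.length false = runCircuit C v w := by
  simpa using vals_new C L [w] v (i := 0) (by simp)

lemma vals_old {C C' : List Gate} {L ws : List ℕ} (v : ℕ → Bool)
    (hpt : ∀ x ∈ L, runCircuit C' v x = runCircuit C v x) {jj : ℕ}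
    (hjj : jj < L.length) :
    ((L ++ ws).map (runCircuit C' v)).getD jj false
      = (L.map (runCircuit C v)).getD jj false := by
  rw [getD_map (by simp; omega), getD_map hjj, List.getD_append _ _ _ _ hjj,
    hpt _ (getD_mem hjj)]

lemma main_aux (I : Finset ℕ) (u : ℕ → Bool) :
    ∀ {d : ℕ} {M : Tm} {C : List Gate} {L : List ℕ} {N : Tm} {C' : List Gate}
      {L' : List ℕ}, AMStep I d M C L N C' L' →
      FVB (d + L.length) M →
      (substAll (L.map (runCircuit C (initVal I u))) d M
        = substAll (L'.map (runCircuit C' (initVal I u))) d N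
      ∨ Step (substAll (L.map (runCircuit C (initVal I u))) d M)
          (substAll (L'.map (runCircuit C' (initVal I u))) d N)
      ∨ ContainsErr N) := by
  intro d M C L N C' L' h
  induction h with
  | beta d M N C L =>
      intro _; right; left
      simp only [substAll]
      rw [substAll_subst0]
      exact Step.beta _ _
  | fstPair d M N C L =>
      intro _; right; left
      simp only [substAll]
      exact Step.fstPair _ _
  | sndPair d M N C L =>
      intro _; right; left
      simp only [substAll]
      exact Step.sndPair _ _
  | letU d M C L =>
      intro _; right; left
      simp only [substAll]
      exact Step.letU _
  | splitRed d M C L =>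
      intro _; right; left
      simp only [substAll]
      exact Step.splitRed _
  | matchInl d P M N C L =>
      intro _; right; left
      simp only [substAll]
      rw [substAll_subst0]
      exact Step.matchInl _ _ _
  | matchInr d P M N C L =>
      intro _; right; left
      simp only [substAll]
      rw [substAll_subst0]
      exact Step.matchInr _ _ _
  | fixRed d M C L =>
      intro _; right; left
      simp only [substAll]
      exact Step.fixRed _
  | ffRed d C L w hw =>
      intro _; left
      rw [substAll_linkvar (by simp), vals_single, fresh_val hw u]
      rfl
  | ttRed d C L w hw =>
      intro _; left
      rw [substAll_linkvar (by simp), vals_single, runCircuit_cons]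
      have : execGate ⟨w, []⟩ (runCircuit C (initVal I u)) w
          = !(runCircuit C (initVal I u) w) := by
        simp [execGate]
      rw [this, fresh_val hw u]
      rfl
  | notRed d C L j w hj hw =>
      intro _; right; left
      have hvS : substAll (L.map (runCircuit C (initVal I u))) d
            (.app .notOp (.var (d + j)))
          = .app .notOp (ofBool (runCircuit C (initVal I u) (L.getD j 0))) := by
        have e := substAll_linkvar (vals := L.map (runCircuit C (initVal I u)))
          (d := d) (n := j) (by simpa using hj)
        rw [getD_map hj] at e
        show Tm.app .notOp (substAll (L.map (runCircuit C (initVal I u))) d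
          (.var (d + j))) = _
        rw [e]
      have hval : runCircuit (⟨w, [(L.getD j 0, false)]⟩ :: C) (initVal I u) w
          = !(runCircuit C (initVal I u) (L.getD j 0)) := by
        rw [runCircuit_cons, execGate1, fresh_val hw u]
        cases runCircuit C (initVal I u) (L.getD j 0) <;> rfl
      rw [hvS, substAll_linkvar (by simp), vals_single, hval]
      exact Step.notRed _
  | andRed d C L j k w hj hk hw =>
      intro _; right; left
      have hvS : substAll (L.map (runCircuit C (initVal I u))) d
            (.app .andOp (.pair (.var (d + j)) (.var (d + k))))
          = .app .andOp (.pair (ofBool (runCircuit C (initVal I u) (L.getD j 0)))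
              (ofBool (runCircuit C (initVal I u) (L.getD k 0)))) := by
        have ej := substAll_linkvar (vals := L.map (runCircuit C (initVal I u)))
          (d := d) (n := j) (by simpa using hj)
        have ek := substAll_linkvar (vals := L.map (runCircuit C (initVal I u)))
          (d := d) (n := k) (by simpa using hk)
        rw [getD_map hj] at ej
        rw [getD_map hk] at ek
        show Tm.app _ (Tm.pair
          (substAll (L.map (runCircuit C (initVal I u))) d (.var (d + j)))
          (substAll (L.map (runCircuit C (initVal I u))) d (.var (d + k)))) = _
        rw [ej, ek]
        rfl
      have hval : runCircuit (⟨w, [(L.getD j 0, true), (L.getD k 0, true)]⟩ :: C)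
            (initVal I u) w
          = (runCircuit C (initVal I u) (L.getD j 0)
              && runCircuit C (initVal I u) (L.getD k 0)) := by
        rw [runCircuit_cons, execGate2, fresh_val hw u]
        cases runCircuit C (initVal I u) (L.getD j 0) <;>
          cases runCircuit C (initVal I u) (L.getD k 0) <;> rfl
      rw [hvS, substAll_linkvar (by simp), vals_single, hval]
      exact Step.andRed _ _
  | xorRed d C L j k w hj hk hw =>
      intro _; right; left
      have hvS : substAll (L.map (runCircuit C (initVal I u))) d
            (.app .xorOp (.pair (.var (d + j)) (.var (d + k))))
          = .app .xorOp (.pair (ofBool (runCircuit C (initVal I u) (L.getD j 0)))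
              (ofBool (runCircuit C (initVal I u) (L.getD k 0)))) := by
        have ej := substAll_linkvar (vals := L.map (runCircuit C (initVal I u)))
          (d := d) (n := j) (by simpa using hj)
        have ek := substAll_linkvar (vals := L.map (runCircuit C (initVal I u)))
          (d := d) (n := k) (by simpa using hk)
        rw [getD_map hj] at ej
        rw [getD_map hk] at ek
        show Tm.app _ (Tm.pair
          (substAll (L.map (runCircuit C (initVal I u))) d (.var (d + j)))
          (substAll (L.map (runCircuit C (initVal I u))) d (.var (d + k)))) = _
        rw [ej, ek]
        rfl
      have hLjw : L.getD j 0 ≠ w := fun e => hw.2.2 (e ▸ getD_mem hj)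
      have hval : runCircuit (⟨w, [(L.getD j 0, true)]⟩ ::
              ⟨w, [(L.getD k 0, true)]⟩ :: C) (initVal I u) w
          = Bool.xor (runCircuit C (initVal I u) (L.getD j 0))
              (runCircuit C (initVal I u) (L.getD k 0)) := by
        rw [runCircuit_cons, runCircuit_cons, execGate1,
          execGate_ne (g := ⟨w, [(L.getD k 0, true)]⟩) hLjw, execGate1, fresh_val hw u]
        cases runCircuit C (initVal I u) (L.getD j 0) <;>
          cases runCircuit C (initVal I u) (L.getD k 0) <;> rfl
      rw [hvS, substAll_linkvar (by simp), vals_single, hval]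
      exact Step.xorRed _ _
  | iteRed d C L j V W U n ps ws hj ha hlen hnd hfr =>
      intro _; right; left
      have hLHS : substAll (L.map (runCircuit C (initVal I u))) d
            (.ite (.var (d + j)) V W)
          = .ite (ofBool (runCircuit C (initVal I u) (L.getD j 0)))
              (substAll (L.map (runCircuit C (initVal I u))) d V)
              (substAll (L.map (runCircuit C (initVal I u))) d W) := by
        have e := substAll_linkvar (vals := L.map (runCircuit C (initVal I u)))
          (d := d) (n := j) (by simpa using hj)
        rw [getD_map hj] at e
        show Tm.ite (substAll (L.map (runCircuit C (initVal I u))) d (.var (d + j)))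
          _ _ = _
        rw [e]
      have hwsL : ∀ w ∈ ws, w ∉ L := fun w hw => (hfr w hw).2.2
      have hcond : ∀ w ∈ ws, runCircuit C (initVal I u) w = false ∧ w ≠ L.getD j 0 ∧
          ∀ p ∈ ps, w ≠ p.1 ∧ w ≠ p.2 := by
        intro w hw
        refine ⟨fresh_val (hfr w hw) u, fun e => hwsL w hw (e ▸ getD_mem hj), ?_⟩
        intro p hp
        have hm := iteaux_mem ha p hp
        exact ⟨fun e => hwsL w hw (e ▸ hm.1), fun e => hwsL w hw (e ▸ hm.2)⟩
      obtain ⟨hA, hB⟩ := iteGates_run (L.getD j 0) ws ps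
        (runCircuit C (initVal I u)) hlen hnd hcond
      have hC' : ∀ x, runCircuit ((iteGates (L.getD j 0) ws ps).reverse ++ C)
            (initVal I u) x
          = runCircuit (iteGates (L.getD j 0) ws ps).reverse
              (runCircuit C (initVal I u)) x := by
        intro x; rw [runCircuit_append]
      have key : substAll (((L ++ ws)).map
            (runCircuit ((iteGates (L.getD j 0) ws ps).reverse ++ C) (initVal I u))) d U
          = substAll (L.map (runCircuit C (initVal I u))) d
              (if runCircuit C (initVal I u) (L.getD j 0) then V else W) := by
        refine iteaux_subst _ _ _ _ (by simp) (fun j' hj' => getD_map hj') ha ?_ ?_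
        · have e := iteaux_len ha
          simp
          omega
        · intro i hi
          have hi' : i < ws.length := by omega
          rw [show ((L ++ ws).map
              (runCircuit ((iteGates (L.getD j 0) ws ps).reverse ++ C) (initVal I u))).getD
              (L.length + i) false
            = runCircuit ((iteGates (L.getD j 0) ws ps).reverse ++ C) (initVal I u)
                (ws.getD i 0) from vals_new _ _ _ _ hi',
            hC', hB i hi']
      rw [hLHS, key]
      cases hb : runCircuit C (initVal I u) (L.getD j 0)
      · rw [if_neg Bool.false_ne_true]
        exact Step.iteFf _ _
      · rw [if_pos rfl]
        exact Step.iteTt _ _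
  | iteErr d C L j V W hj hV hW hns =>
      intro _; right; right
      exact ContainsErr.err
  | lamC hsub ih =>
      rename_i d M C L M' C' L'
      intro fv
      have fv' : FVB (d + 1 + L.length) M := by
        have h0 : FVB (d + L.length + 1) M := fv
        rwa [show d + L.length + 1 = d + 1 + L.length from by omega] at h0
      rcases ih fv' with h1 | h1 | h1
      · left; simp only [substAll]; rw [h1]
      · right; left; simp only [substAll]; exact Step.lamC h1
      · right; right; exact ContainsErr.lam h1
  | appL N hsub ih =>
      rename_i d M C L M' C' L'
      intro fv
      obtain ⟨hf1, hf2⟩ := fv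
      obtain ⟨extra, hex⟩ := am_vals_prefix hsub (initVal I u)
      have hN : substAll (L'.map (runCircuit C' (initVal I u))) d N
          = substAll (L.map (runCircuit C (initVal I u))) d N := by
        rw [hex]; exact substAll_extend _ _ N d (by simpa using hf2)
      rcases ih hf1 with h1 | h1 | h1
      · left; simp only [substAll]; rw [h1, hN]
      · right; left; simp only [substAll]; rw [hN]; exact Step.appL h1
      · right; right; exact ContainsErr.appL h1
  | appR M hsub ih =>
      rename_i d N C L N' C' L'
      intro fv
      obtain ⟨hf1, hf2⟩ := fv
      obtain ⟨extra, hex⟩ := am_vals_prefix hsub (initVal I u)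
      have hM : substAll (L'.map (runCircuit C' (initVal I u))) d M
          = substAll (L.map (runCircuit C (initVal I u))) d M := by
        rw [hex]; exact substAll_extend _ _ M d (by simpa using hf1)
      rcases ih hf2 with h1 | h1 | h1
      · left; simp only [substAll]; rw [h1, hM]
      · right; left; simp only [substAll]; rw [hM]; exact Step.appR h1
      · right; right; exact ContainsErr.appR h1
  | pairL N hsub ih =>
      rename_i d M C L M' C' L'
      intro fv
      obtain ⟨hf1, hf2⟩ := fv
      obtain ⟨extra, hex⟩ := am_vals_prefix hsub (initVal I u)
      have hN : substAll (L'.map (runCircuit C' (initVal I u))) d N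
          = substAll (L.map (runCircuit C (initVal I u))) d N := by
        rw [hex]; exact substAll_extend _ _ N d (by simpa using hf2)
      rcases ih hf1 with h1 | h1 | h1
      · left; simp only [substAll]; rw [h1, hN]
      · right; left; simp only [substAll]; rw [hN]; exact Step.pairL h1
      · right; right; exact ContainsErr.pairL h1
  | pairR M hsub ih =>
      rename_i d N C L N' C' L'
      intro fv
      obtain ⟨hf1, hf2⟩ := fv
      obtain ⟨extra, hex⟩ := am_vals_prefix hsub (initVal I u)
      have hM : substAll (L'.map (runCircuit C' (initVal I u))) d M
          = substAll (L.map (runCircuit C (initVal I u))) d M := by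
        rw [hex]; exact substAll_extend _ _ M d (by simpa using hf1)
      rcases ih hf2 with h1 | h1 | h1
      · left; simp only [substAll]; rw [h1, hM]
      · right; left; simp only [substAll]; rw [hM]; exact Step.pairR h1
      · right; right; exact ContainsErr.pairR h1
  | fstC hsub ih =>
      intro fv
      rcases ih fv with h1 | h1 | h1
      · left; simp only [substAll]; rw [h1]
      · right; left; simp only [substAll]; exact Step.fstC h1
      · right; right; exact ContainsErr.fst h1
  | sndC hsub ih =>
      intro fv
      rcases ih fv with h1 | h1 | h1
      · left; simp only [substAll]; rw [h1]
      · right; left; simp only [substAll]; exact Step.sndC h1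
      · right; right; exact ContainsErr.snd h1
  | letL N hsub ih =>
      rename_i d M C L M' C' L'
      intro fv
      obtain ⟨hf1, hf2⟩ := fv
      obtain ⟨extra, hex⟩ := am_vals_prefix hsub (initVal I u)
      have hN : substAll (L'.map (runCircuit C' (initVal I u))) d N
          = substAll (L.map (runCircuit C (initVal I u))) d N := by
        rw [hex]; exact substAll_extend _ _ N d (by simpa using hf2)
      rcases ih hf1 with h1 | h1 | h1
      · left; simp only [substAll]; rw [h1, hN]
      · right; left; simp only [substAll]; rw [hN]; exact Step.letL h1
      · right; right; exact ContainsErr.letL h1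
  | letR M hsub ih =>
      rename_i d N C L N' C' L'
      intro fv
      obtain ⟨hf1, hf2⟩ := fv
      obtain ⟨extra, hex⟩ := am_vals_prefix hsub (initVal I u)
      have hM : substAll (L'.map (runCircuit C' (initVal I u))) d M
          = substAll (L.map (runCircuit C (initVal I u))) d M := by
        rw [hex]; exact substAll_extend _ _ M d (by simpa using hf1)
      rcases ih hf2 with h1 | h1 | h1
      · left; simp only [substAll]; rw [h1, hM]
      · right; left; simp only [substAll]; rw [hM]; exact Step.letR h1
      · right; right; exact ContainsErr.letR h1
  | ite1 M N hsub ih =>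
      rename_i d P C L P' C' L'
      intro fv
      obtain ⟨hfP, hfM, hfN⟩ := fv
      obtain ⟨extra, hex⟩ := am_vals_prefix hsub (initVal I u)
      have hM : substAll (L'.map (runCircuit C' (initVal I u))) d M
          = substAll (L.map (runCircuit C (initVal I u))) d M := by
        rw [hex]; exact substAll_extend _ _ M d (by simpa using hfM)
      have hN : substAll (L'.map (runCircuit C' (initVal I u))) d N
          = substAll (L.map (runCircuit C (initVal I u))) d N := by
        rw [hex]; exact substAll_extend _ _ N d (by simpa using hfN)
      rcases ih hfP with h1 | h1 | h1
      · left; simp only [substAll]; rw [h1, hM, hN]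
      · right; left; simp only [substAll]; rw [hM, hN]; exact Step.ite1 h1
      · right; right; exact ContainsErr.ite1 h1
  | ite2 P N hsub ih =>
      rename_i d M C L M' C' L'
      intro fv
      obtain ⟨hfP, hfM, hfN⟩ := fv
      obtain ⟨extra, hex⟩ := am_vals_prefix hsub (initVal I u)
      have hP : substAll (L'.map (runCircuit C' (initVal I u))) d P
          = substAll (L.map (runCircuit C (initVal I u))) d P := by
        rw [hex]; exact substAll_extend _ _ P d (by simpa using hfP)
      have hN : substAll (L'.map (runCircuit C' (initVal I u))) d N
          = substAll (L.map (runCircuit C (initVal I u))) d N := by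
        rw [hex]; exact substAll_extend _ _ N d (by simpa using hfN)
      rcases ih hfM with h1 | h1 | h1
      · left; simp only [substAll]; rw [h1, hP, hN]
      · right; left; simp only [substAll]; rw [hP, hN]; exact Step.ite2 h1
      · right; right; exact ContainsErr.ite2 h1
  | ite3 P M hsub ih =>
      rename_i d N C L N' C' L'
      intro fv
      obtain ⟨hfP, hfM, hfN⟩ := fv
      obtain ⟨extra, hex⟩ := am_vals_prefix hsub (initVal I u)
      have hP : substAll (L'.map (runCircuit C' (initVal I u))) d P
          = substAll (L.map (runCircuit C (initVal I u))) d P := by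
        rw [hex]; exact substAll_extend _ _ P d (by simpa using hfP)
      have hM : substAll (L'.map (runCircuit C' (initVal I u))) d M
          = substAll (L.map (runCircuit C (initVal I u))) d M := by
        rw [hex]; exact substAll_extend _ _ M d (by simpa using hfM)
      rcases ih hfN with h1 | h1 | h1
      · left; simp only [substAll]; rw [h1, hP, hM]
      · right; left; simp only [substAll]; rw [hP, hM]; exact Step.ite3 h1
      · right; right; exact ContainsErr.ite3 h1
  | inlC hsub ih =>
      intro fv
      rcases ih fv with h1 | h1 | h1
      · left; simp only [substAll]; rw [h1]
      · right; left; simp only [substAll]; exact Step.inlC h1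
      · right; right; exact ContainsErr.inl h1
  | inrC hsub ih =>
      intro fv
      rcases ih fv with h1 | h1 | h1
      · left; simp only [substAll]; rw [h1]
      · right; left; simp only [substAll]; exact Step.inrC h1
      · right; right; exact ContainsErr.inr h1
  | match1 M N hsub ih =>
      rename_i d P C L P' C' L'
      intro fv
      obtain ⟨hfP, hfM, hfN⟩ := fv
      obtain ⟨extra, hex⟩ := am_vals_prefix hsub (initVal I u)
      have hM : substAll (L'.map (runCircuit C' (initVal I u))) (d+1) M
          = substAll (L.map (runCircuit C (initVal I u))) (d+1) M := by
        rw [hex]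
        refine substAll_extend _ _ M (d+1) ?_
        have : FVB (d + 1 + L.length) M := by
          rwa [show d + 1 + L.length = d + L.length + 1 from by omega]
        simpa using this
      have hN : substAll (L'.map (runCircuit C' (initVal I u))) (d+1) N
          = substAll (L.map (runCircuit C (initVal I u))) (d+1) N := by
        rw [hex]
        refine substAll_extend _ _ N (d+1) ?_
        have : FVB (d + 1 + L.length) N := by
          rwa [show d + 1 + L.length = d + L.length + 1 from by omega]
        simpa using this
      rcases ih hfP with h1 | h1 | h1
      · left; simp only [substAll]; rw [h1, hM, hN]
      · right; left; simp only [substAll]; rw [hM, hN]; exact Step.match1 h1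
      · right; right; exact ContainsErr.match1 h1
  | match2 P N hsub ih =>
      rename_i d M C L M' C' L'
      intro fv
      obtain ⟨hfP, hfM, hfN⟩ := fv
      obtain ⟨extra, hex⟩ := am_vals_prefix hsub (initVal I u)
      have hP : substAll (L'.map (runCircuit C' (initVal I u))) d P
          = substAll (L.map (runCircuit C (initVal I u))) d P := by
        rw [hex]; exact substAll_extend _ _ P d (by simpa using hfP)
      have hN : substAll (L'.map (runCircuit C' (initVal I u))) (d+1) N
          = substAll (L.map (runCircuit C (initVal I u))) (d+1) N := by
        rw [hex]
        refine substAll_extend _ _ N (d+1) ?_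
        have : FVB (d + 1 + L.length) N := by
          rwa [show d + 1 + L.length = d + L.length + 1 from by omega]
        simpa using this
      have hfM' : FVB (d + 1 + L.length) M := by
        rwa [show d + 1 + L.length = d + L.length + 1 from by omega]
      rcases ih hfM' with h1 | h1 | h1
      · left; simp only [substAll]; rw [h1, hP, hN]
      · right; left; simp only [substAll]; rw [hP, hN]; exact Step.match2 h1
      · right; right; exact ContainsErr.match2 h1
  | match3 P M hsub ih =>
      rename_i d N C L N' C' L'
      intro fv
      obtain ⟨hfP, hfM, hfN⟩ := fv
      obtain ⟨extra, hex⟩ := am_vals_prefix hsub (initVal I u)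
      have hP : substAll (L'.map (runCircuit C' (initVal I u))) d P
          = substAll (L.map (runCircuit C (initVal I u))) d P := by
        rw [hex]; exact substAll_extend _ _ P d (by simpa using hfP)
      have hM : substAll (L'.map (runCircuit C' (initVal I u))) (d+1) M
          = substAll (L.map (runCircuit C (initVal I u))) (d+1) M := by
        rw [hex]
        refine substAll_extend _ _ M (d+1) ?_
        have : FVB (d + 1 + L.length) M := by
          rwa [show d + 1 + L.length = d + L.length + 1 from by omega]
        simpa using this
      have hfN' : FVB (d + 1 + L.length) N := by
        rwa [show d + 1 + L.length = d + L.length + 1 from by omega]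
      rcases ih hfN' with h1 | h1 | h1
      · left; simp only [substAll]; rw [h1, hP, hM]
      · right; left; simp only [substAll]; rw [hP, hM]; exact Step.match3 h1
      · right; right; exact ContainsErr.match3 h1
  | fixC hsub ih =>
      intro fv
      rcases ih fv with h1 | h1 | h1
      · left; simp only [substAll]; rw [h1]
      · right; left; simp only [substAll]; exact Step.fixC h1
      · right; right; exact ContainsErr.fix h1
/-- one-step simulation invariant (Lemma on a single step of
the abstract machine): for every valuation `u⃗` on `I`, either
`T(M,(I,C),L)(u⃗) = T(N,(I,C'),L')(u⃗)` (as when the step eliminates a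
boolean constant), or `T(M,(I,C),L)(u⃗)` reduces in one small-step to
`T(N,(I,C'),L')(u⃗)`, or `N` contains Err. -/
theorem am_simulation_invariant (I : Finset ℕ) (M N : Tm)
    (C C' : List Gate) (L L' : List ℕ) (m : ℕ) (hL : L.Nodup)
    (ht : HasType (List.replicate L.length Ty.bit) M (bitPow m))
    (hs : AMStep I 0 M C L N C' L') :
    ∀ u : ℕ → Bool,
      Tfun M C L (initVal I u) = Tfun N C' L' (initVal I u) ∨
      Step (Tfun M C L (initVal I u)) (Tfun N C' L' (initVal I u)) ∨
      ContainsErr N := by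
  intro u
  have fv : FVB (0 + L.length) M := by simpa using hasType_fvb ht
  simpa [Tfun] using main_aux I u hs fv
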